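/- Let θ ∈ (0, π/2], let Π be an affine subspace of ℝ³, let A, B, D ∈ Π with B ≠ D, and let C ∈ ℝ³ with C ≠ A, C ≠ D and A ≠ D. If the distance from C to Π is at least sin θ · dist(A, C), then sin(∠(A D C)) ≤ sin(∠(B D C)) / sin θ. -/

import Mathlib

open Real EuclideanGeometry

lemma sin_angle_norm_eq_aux {V : Type*} [NormedAddCommGroup V] [InnerProductSpace ℝ V]
    {x : V} (y : V) (hx : x ≠ 0) :
    Real.sin (InnerProductGeometry.angle x y) * ‖y‖
      = ‖y - ((inner ℝ x y : ℝ) / ‖x‖ ^ 2) • x‖ := by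
  have hx0 : (0:ℝ) < ‖x‖ := norm_pos_iff.mpr hx
  set c : ℝ := inner ℝ x y with hc
  have hcs : c * c ≤ (inner ℝ x x : ℝ) * inner ℝ y y := real_inner_mul_inner_self_le x y
  have hkey := InnerProductGeometry.sin_angle_mul_norm_mul_norm x y
  have h1 : (Real.sin (InnerProductGeometry.angle x y) * (‖x‖ * ‖y‖))^2
      = (inner ℝ x x : ℝ) * inner ℝ y y - c * c := by
    rw [hkey]; exact Real.sq_sqrt (by linarith)
  have hxx : (inner ℝ x x : ℝ) = ‖x‖^2 := real_inner_self_eq_norm_sq x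
  have hyy : (inner ℝ y y : ℝ) = ‖y‖^2 := real_inner_self_eq_norm_sq y
  have h2 : ‖y - (c / ‖x‖ ^ 2) • x‖^2 = ‖y‖^2 - c^2 / ‖x‖^2 := by
    rw [norm_sub_sq_real, real_inner_smul_right, norm_smul, real_inner_comm, ← hc]
    rw [mul_pow, Real.norm_eq_abs, sq_abs]
    field_simp
    ring
  have hs : 0 ≤ Real.sin (InnerProductGeometry.angle x y) :=
    Real.sin_nonneg_of_nonneg_of_le_pi (InnerProductGeometry.angle_nonneg x y)
      (InnerProductGeometry.angle_le_pi x y)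
  have hl : 0 ≤ Real.sin (InnerProductGeometry.angle x y) * ‖y‖ :=
    mul_nonneg hs (norm_nonneg y)
  have hsq : (Real.sin (InnerProductGeometry.angle x y) * ‖y‖)^2
      = ‖y - (c / ‖x‖ ^ 2) • x‖^2 := by
    have : (Real.sin (InnerProductGeometry.angle x y) * ‖y‖)^2 * ‖x‖^2
        = (‖y‖^2 - c^2 / ‖x‖^2) * ‖x‖^2 := by
      have := h1
      rw [hxx, hyy] at this
      field_simp at this ⊢
      nlinarith [this]
    rw [h2]
    have hx2 : (0:ℝ) < ‖x‖^2 := by positivity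
    exact mul_right_cancel₀ (ne_of_gt hx2) this
  calc Real.sin (InnerProductGeometry.angle x y) * ‖y‖
      = √((Real.sin (InnerProductGeometry.angle x y) * ‖y‖)^2) := (Real.sqrt_sq hl).symm
    _ = √(‖y - (c / ‖x‖ ^ 2) • x‖^2) := by rw [hsq]
    _ = _ := Real.sqrt_sq (norm_nonneg _)

lemma proj_dist_le_aux {V : Type*} [NormedAddCommGroup V] [InnerProductSpace ℝ V]
    {x : V} (y : V) (hx : x ≠ 0) :
    ‖y - ((inner ℝ x y : ℝ) / ‖x‖ ^ 2) • x‖ ≤ ‖y - x‖ := by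
  have hx0 : (0:ℝ) < ‖x‖ := norm_pos_iff.mpr hx
  set c : ℝ := inner ℝ x y with hc
  have h2 : ‖y - (c / ‖x‖ ^ 2) • x‖^2 = ‖y‖^2 - c^2 / ‖x‖^2 := by
    rw [norm_sub_sq_real, real_inner_smul_right, norm_smul, real_inner_comm, ← hc]
    rw [mul_pow, Real.norm_eq_abs, sq_abs]
    field_simp
    ring
  have h3 : ‖y - x‖^2 = ‖y‖^2 - 2 * c + ‖x‖^2 := by
    rw [norm_sub_sq_real, real_inner_comm, ← hc]
  have : ‖y - (c / ‖x‖ ^ 2) • x‖^2 ≤ ‖y - x‖^2 := by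
    rw [h2, h3]
    have hx2 : (0:ℝ) < ‖x‖^2 := by positivity
    have key : c^2/‖x‖^2 * ‖x‖^2 = c^2 := div_mul_cancel₀ _ (ne_of_gt hx2)
    nlinarith [sq_nonneg (‖x‖^2 - c), key, hx2]
  calc ‖y - (c / ‖x‖ ^ 2) • x‖ = √(‖y - (c / ‖x‖ ^ 2) • x‖^2) := (Real.sqrt_sq (norm_nonneg _)).symm
    _ ≤ √(‖y - x‖^2) := Real.sqrt_le_sqrt this
    _ = ‖y - x‖ := Real.sqrt_sq (norm_nonneg _)

theorem sine_comparison (θ : ℝ) (hθ : θ ∈ Set.Ioc 0 (π / 2))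
    (P : AffineSubspace ℝ (EuclideanSpace ℝ (Fin 3)))
    (A B D C : EuclideanSpace ℝ (Fin 3))
    (hA : A ∈ P) (hB : B ∈ P) (hD : D ∈ P)
    (hBD : B ≠ D) (hCA : C ≠ A) (hCD : C ≠ D) (hAD : A ≠ D)
    (hdist : Real.sin θ * dist A C ≤ Metric.infDist C (P : Set (EuclideanSpace ℝ (Fin 3)))) :
    Real.sin (∠ A D C) ≤ Real.sin (∠ B D C) / Real.sin θ := by
  have hsθ : 0 < Real.sin θ :=
    Real.sin_pos_of_pos_of_lt_pi hθ.1 (lt_of_le_of_lt hθ.2 (by linarith [Real.pi_pos]))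
  have hxB : B -ᵥ D ≠ (0 : EuclideanSpace ℝ (Fin 3)) := vsub_ne_zero.mpr hBD
  have hxA : A -ᵥ D ≠ (0 : EuclideanSpace ℝ (Fin 3)) := vsub_ne_zero.mpr hAD
  have hdCD : 0 < dist C D := dist_pos.mpr hCD
  have h1 : Real.sin (∠ A D C) * dist C D ≤ dist A C := by
    calc Real.sin (∠ A D C) * dist C D
        = ‖(C -ᵥ D) - ((inner ℝ (A -ᵥ D) (C -ᵥ D) : ℝ)/‖A -ᵥ D‖^2) • (A -ᵥ D)‖ := by
          rw [EuclideanGeometry.angle, dist_eq_norm_vsub (EuclideanSpace ℝ (Fin 3)) C D]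
          exact sin_angle_norm_eq_aux _ hxA
      _ ≤ ‖(C -ᵥ D) - (A -ᵥ D)‖ := proj_dist_le_aux _ hxA
      _ = dist A C := by
          rw [vsub_sub_vsub_cancel_right, ← dist_eq_norm_vsub, dist_comm]
  have h2 : Metric.infDist C (P : Set (EuclideanSpace ℝ (Fin 3)))
      ≤ Real.sin (∠ B D C) * dist C D := by
    set t : ℝ := (inner ℝ (B -ᵥ D) (C -ᵥ D) : ℝ)/‖B -ᵥ D‖^2 with ht
    have hq : t • (B -ᵥ D) +ᵥ D ∈ P := AffineSubspace.smul_vsub_vadd_mem P t hB hD hD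
    have hle : Metric.infDist C (P : Set (EuclideanSpace ℝ (Fin 3)))
        ≤ dist C (t • (B -ᵥ D) +ᵥ D) := Metric.infDist_le_dist_of_mem hq
    have heq : dist C (t • (B -ᵥ D) +ᵥ D) = ‖(C -ᵥ D) - t • (B -ᵥ D)‖ := by
      rw [dist_eq_norm_vsub (EuclideanSpace ℝ (Fin 3)), vsub_vadd_eq_vsub_sub]
    rw [EuclideanGeometry.angle, dist_eq_norm_vsub (EuclideanSpace ℝ (Fin 3)) C D,
      sin_angle_norm_eq_aux _ hxB]
    rw [heq] at hle
    exact hle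
  rw [le_div_iff₀ hsθ]
  nlinarith [mul_le_mul_of_nonneg_left h1 hsθ.le, hdist.trans h2, hdCD]
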